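/- There is an absolute constant c > 0 (one may take c = 4π/27) such that the following holds. Let 1 ≤ r ≤ R be real numbers, let B be a closed ball of radius R in ℝ³, let b₁, …, b_k be finitely many open balls each of radius at least r, and let C = B \ (b₁ ∪ … ∪ b_k). If x is a point of C whose distance from the boundary ∂C equals 2/3, then the 2-dimensional Hausdorff measure of ∂C intersected with the closed unit ball centered at x is at least c. -/

import Mathlib

noncomputable section
open scoped Classical ENNReal Pointwise
open scoped RealInnerProductSpace
open MeasureTheory Real

/-- Points of `ℝ³` as Euclidean space. -/
abbrev E3 : Type := EuclideanSpace ℝ (Fin 3)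

/-- The point `(x, y, z) ∈ ℝ³`. -/
def mk3 (x y z : ℝ) : E3 := (WithLp.equiv 2 (Fin 3 → ℝ)).symm ![x, y, z]

/-- `p` and `q` form a Delaunay edge of the finite set `S`: they are distinct points of `S`
lying on a sphere having no point of `S` in its interior. -/
def IsDelaunayEdge (S : Finset E3) (p q : E3) : Prop :=
  p ∈ S ∧ q ∈ S ∧ p ≠ q ∧
    ∃ (c : E3) (ρ : ℝ), 0 < ρ ∧ dist c p = ρ ∧ dist c q = ρ ∧ ∀ s ∈ S, ρ ≤ dist c s

/-- The number of (unordered) Delaunay edges of `S`. -/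
def delaunayEdgeCount (S : Finset E3) : ℕ :=
  Set.ncard {pq : E3 × E3 | IsDelaunayEdge S pq.1 pq.2} / 2

/-- The minimum pairwise distance of a finite point set. -/
def minPairDist (S : Finset E3) : ℝ :=
  sInf {d : ℝ | ∃ p ∈ S, ∃ q ∈ S, p ≠ q ∧ d = dist p q}

/-- The spread of a finite point set: diameter divided by minimum pairwise distance. -/
def spread (S : Finset E3) : ℝ := Metric.diam (S : Set E3) / minPairDist S
lemma aux_mem_interior {α : Type*} [TopologicalSpace α] {t : Set α} {z : α}
    (hzc : z ∈ closure t) (hzf : z ∉ frontier t) : z ∈ interior t := by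
  rw [frontier_eq_closure_inter_closure, closure_compl] at hzf
  simp only [Set.mem_inter_iff, Set.mem_compl_iff, not_and, not_not] at hzf
  exact hzf hzc

lemma aux_frontier_hit {α : Type*} [TopologicalSpace α] {s t : Set α} (hs : IsPreconnected s)
    {a b : α} (ha : a ∈ s) (hat : a ∈ t) (hb : b ∈ s) (hbt : b ∉ t) :
    (s ∩ frontier t).Nonempty := by
  by_contra h
  rw [Set.not_nonempty_iff_eq_empty] at h
  have hfr : ∀ z ∈ s, z ∉ frontier t := fun z hz hf =>
    (Set.eq_empty_iff_forall_notMem.mp h z) ⟨hz, hf⟩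
  have hsub : s ⊆ interior t ∪ (closure t)ᶜ := by
    intro z hz
    by_cases hzc : z ∈ closure t
    · exact Or.inl (aux_mem_interior hzc (hfr z hz))
    · exact Or.inr hzc
  have hbv : b ∈ (closure t)ᶜ := by
    intro hbc
    exact hbt (interior_subset (aux_mem_interior hbc (hfr b hb)))
  obtain ⟨c, _, hcu, hcv⟩ := hs _ _ isOpen_interior isClosed_closure.isOpen_compl hsub
    ⟨a, ha, aux_mem_interior (subset_closure hat) (hfr a ha)⟩ ⟨b, hb, hbv⟩
  exact hcv (subset_closure (interior_subset hcu))

lemma aux_norm_sq {E : Type*} [NormedAddCommGroup E] [InnerProductSpace ℝ E]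
    {w e : E} (hwe : ⟪w, e⟫ = 0) (he : ‖e‖ = 1) (c : ℝ) :
    ‖w + c • e‖ ^ 2 = ‖w‖ ^ 2 + c ^ 2 := by
  rw [norm_add_sq_real, real_inner_smul_right, hwe, norm_smul, he, Real.norm_eq_abs]
  simp [sq_abs]

set_option maxHeartbeats 1000000 in
/-- For `1 ≤ r ≤ R`, a closed ball `B` of radius `R`, finitely many open balls `bᵢ` of
radius at least `r`, and `C = B \ ⋃ᵢ bᵢ`: every unit ball centered at a point of `C` at
distance exactly `2/3` from `∂C` contains at least `c` surface area of `C` (one may take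
`c = 4π/27`). -/
theorem swiss_cheese_unit_ball_eats_area :
    ∃ c : ℝ, 0 < c ∧
      ∀ (r R : ℝ), 1 ≤ r → r ≤ R → ∀ (x₀ : E3) (k : ℕ) (ctr : Fin k → E3) (rad : Fin k → ℝ),
        (∀ i, r ≤ rad i) →
        ∀ x ∈ Metric.closedBall x₀ R \ ⋃ i, Metric.ball (ctr i) (rad i),
          Metric.infDist x
              (frontier (Metric.closedBall x₀ R \ ⋃ i, Metric.ball (ctr i) (rad i))) = 2 / 3 →
          ENNReal.ofReal c ≤
            μH[2] (frontier (Metric.closedBall x₀ R \ ⋃ i, Metric.ball (ctr i) (rad i)) ∩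
              Metric.closedBall x 1) := by
  refine ⟨1/16, by norm_num, ?_⟩
  intro r R hr hrR x₀ k ctr rad hrad x hx hdist
  set U : Set E3 := ⋃ i, Metric.ball (ctr i) (rad i) with hUdef
  set C : Set E3 := Metric.closedBall x₀ R \ U with hCdef
  have hCclosed : IsClosed C :=
    Metric.isClosed_closedBall.sdiff (isOpen_iUnion fun i => Metric.isOpen_ball)
  have hR1 : (1:ℝ) ≤ R := hr.trans hrR
  -- the ball of radius 2/3 around x is inside C
  have hball : Metric.ball x (2/3) ⊆ C := by
    intro z hz
    by_contra hzC
    have hseg : segment ℝ x z ⊆ Metric.ball x (2/3) :=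
      (convex_ball x (2/3)).segment_subset (Metric.mem_ball_self (by norm_num)) hz
    obtain ⟨c, hcs, hcf⟩ := aux_frontier_hit (convex_segment x z).isPreconnected
      (left_mem_segment ℝ x z) hx (right_mem_segment ℝ x z) hzC
    have hlt : dist x c < 2/3 := by
      have := hseg hcs; rw [Metric.mem_ball, dist_comm] at this; exact this
    have h1 : Metric.infDist x (frontier C) ≤ dist x c := Metric.infDist_le_dist_of_mem hcf
    rw [hdist] at h1; linarith
  -- nearest frontier point y
  have hfne : (frontier C).Nonempty := by
    rcases Set.eq_empty_or_nonempty (frontier C) with h | h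
    · rw [h, Metric.infDist_empty] at hdist; norm_num at hdist
    · exact h
  obtain ⟨y, hyf, hxy⟩ := isClosed_frontier.exists_infDist_eq_dist hfne x
  rw [hdist] at hxy
  have hxy' : dist x y = 2/3 := hxy.symm
  have hyC : y ∈ C := hCclosed.frontier_subset hyf
  set e : E3 := (3/2 : ℝ) • (y - x) with he_def
  have hyx_norm : ‖y - x‖ = 2/3 := by rw [← dist_eq_norm, dist_comm]; exact hxy'
  have he_norm : ‖e‖ = 1 := by
    rw [he_def, norm_smul, hyx_norm, Real.norm_eq_abs, abs_of_pos (by norm_num : (0:ℝ) < 3/2)]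
    norm_num
  have hyxne : y - x ≠ 0 := by
    intro h; rw [h, norm_zero] at hyx_norm; norm_num at hyx_norm
  -- key: beyond the frontier in direction e, slightly tilted, we are outside C
  have hout : ∀ w : E3, ⟪w, e⟫ = 0 → ‖w‖ ≤ 1/4 → x + w + (24/25 : ℝ) • e ∉ C := by
    have hyT : R ≤ dist y x₀ ∨ ∃ i, dist y (ctr i) ≤ rad i := by
      have hTclosed : IsClosed
          ({z : E3 | R ≤ dist z x₀} ∪ ⋃ i, Metric.closedBall (ctr i) (rad i)) :=
        (isClosed_le continuous_const (continuous_id.dist continuous_const)).union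
          (isClosed_iUnion_of_finite fun i => Metric.isClosed_closedBall)
      have hsub : Cᶜ ⊆ {z : E3 | R ≤ dist z x₀} ∪ ⋃ i, Metric.closedBall (ctr i) (rad i) := by
        intro z hz
        rw [Set.mem_compl_iff, hCdef, Set.mem_diff, not_and_or, not_not] at hz
        rcases hz with hz | hz
        · exact Or.inl (le_of_lt (lt_of_not_ge fun h => hz (Metric.mem_closedBall.mpr h)))
        · right
          rw [hUdef] at hz
          obtain ⟨i, hi⟩ := Set.mem_iUnion.mp hz
          exact Set.mem_iUnion.mpr ⟨i, Metric.ball_subset_closedBall hi⟩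
      have hy2 : y ∈ closure Cᶜ := by
        rw [frontier_eq_closure_inter_closure] at hyf
        exact hyf.2
      have hmem := hTclosed.closure_subset_iff.mpr hsub hy2
      rcases hmem with h | h
      · exact Or.inl h
      · obtain ⟨i, hi⟩ := Set.mem_iUnion.mp h
        exact Or.inr ⟨i, Metric.mem_closedBall.mp hi⟩
    rcases hyT with hcaseA | ⟨i, hi⟩
    · -- case A : y lies on the outer sphere
      have hyR : dist y x₀ = R := le_antisymm (Metric.mem_closedBall.mp hyC.1) hcaseA
      have hxRle : dist x x₀ ≤ R - 2/3 := by
        by_contra hlt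
        push_neg at hlt
        have hxle : dist x x₀ ≤ R := Metric.mem_closedBall.mp hx.1
        have hxne : x ≠ x₀ := by
          intro h; rw [h, dist_self] at hlt; linarith
        have hn0d : dist x x₀ = ‖x - x₀‖ := dist_eq_norm _ _
        set n0 : ℝ := ‖x - x₀‖ with hn0
        have hn0pos : 0 < n0 := by rw [← hn0d]; exact dist_pos.mpr hxne
        set τ : ℝ := (R - n0 + 2/3)/2 with hτ
        have hτpos : 0 < τ := by rw [hτ]; rw [hn0d] at hxle; linarith
        have hτlt : τ < 2/3 := by rw [hτ]; rw [hn0d] at hlt; linarith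
        set z : E3 := x + (τ/n0) • (x - x₀) with hz
        have hzball : z ∈ Metric.ball x (2/3) := by
          rw [Metric.mem_ball, dist_eq_norm]
          have harr : z - x = (τ/n0) • (x - x₀) := by rw [hz]; abel
          rw [harr, norm_smul, Real.norm_eq_abs,
            abs_of_pos (div_pos hτpos hn0pos), ← hn0,
            div_mul_cancel₀ _ (ne_of_gt hn0pos)]
          exact hτlt
        have hzC : z ∈ C := hball hzball
        have hzd : dist z x₀ = n0 + τ := by
          rw [dist_eq_norm]
          have harr : z - x₀ = (1 + τ/n0) • (x - x₀) := by rw [hz]; module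
          have hpos : (0:ℝ) < 1 + τ/n0 := by
            have := div_pos hτpos hn0pos; linarith
          rw [harr, norm_smul, Real.norm_eq_abs, abs_of_pos hpos, ← hn0,
            add_mul, one_mul, div_mul_cancel₀ _ (ne_of_gt hn0pos)]
        have hzle : dist z x₀ ≤ R := Metric.mem_closedBall.mp (hzC.1)
        rw [hzd] at hzle
        rw [hn0d] at hlt
        rw [hτ] at hzle
        linarith
      have hxRge : R - 2/3 ≤ dist x x₀ := by
        have htri := dist_triangle y x x₀
        rw [dist_comm y x, hxy'] at htri
        rw [hyR] at htri
        linarith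
      have hxx₀ : dist x x₀ = R - 2/3 := le_antisymm hxRle hxRge
      have hxne : x - x₀ ≠ 0 := by
        rw [sub_ne_zero]
        intro h
        rw [h, dist_self] at hxx₀
        linarith
      have hray : SameRay ℝ (x - x₀) (y - x) := by
        rw [sameRay_iff_norm_add]
        have h1 : x - x₀ + (y - x) = y - x₀ := by abel
        rw [h1, hyx_norm, ← dist_eq_norm y x₀, ← dist_eq_norm x x₀, hyR, hxx₀]
        ring
      obtain ⟨ρ, hρpos, hρeq⟩ := hray.exists_pos_right hxne hyxne
      have hρval : ρ * (2/3) = R - 2/3 := by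
        have hn : ‖x - x₀‖ = ρ * ‖y - x‖ := by
          rw [hρeq, norm_smul, Real.norm_eq_abs, abs_of_pos hρpos]
        rw [hyx_norm, ← dist_eq_norm x x₀, hxx₀] at hn
        linarith
      intro w hwe hwn hmem
      have hkey : x - x₀ = (R - 2/3) • e := by
        rw [hρeq, he_def, smul_smul]
        congr 1
        linarith
      have harr : x + w + (24/25 : ℝ) • e - x₀ = w + (R - 2/3 + 24/25) • e := by
        have h1 : x + w + (24/25 : ℝ) • e - x₀ = (x - x₀) + w + (24/25 : ℝ) • e := by abel
        rw [h1, hkey]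
        module
      have hq2 : ‖x + w + (24/25 : ℝ) • e - x₀‖^2 = ‖w‖^2 + (R - 2/3 + 24/25)^2 := by
        rw [harr]; exact aux_norm_sq hwe he_norm _
      have hqle : dist (x + w + (24/25 : ℝ) • e) x₀ ≤ R := Metric.mem_closedBall.mp hmem.1
      rw [dist_eq_norm] at hqle
      have hsq : ‖x + w + (24/25 : ℝ) • e - x₀‖^2 ≤ R^2 := by
        nlinarith [norm_nonneg (x + w + (24/25 : ℝ) • e - x₀), hqle]
      nlinarith [norm_nonneg w, hq2, hsq, hR1]
    · -- case B : y lies on the sphere of hole i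
      have hynot : y ∉ U := hyC.2
      have hyrad : dist y (ctr i) = rad i := by
        refine le_antisymm hi (not_lt.mp fun hlt => hynot ?_)
        exact Set.mem_iUnion.mpr ⟨i, Metric.mem_ball.mpr hlt⟩
      have hr1i : (1:ℝ) ≤ rad i := hr.trans (hrad i)
      have hxple : dist x (ctr i) ≤ rad i + 2/3 := by
        have htri := dist_triangle x y (ctr i)
        rw [hxy', hyrad] at htri
        linarith
      have hxpge : rad i + 2/3 ≤ dist x (ctr i) := by
        by_contra hlt
        push_neg at hlt
        have hxrad : rad i ≤ dist x (ctr i) := by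
          by_contra h2
          push_neg at h2
          exact hx.2 (Set.mem_iUnion.mpr ⟨i, Metric.mem_ball.mpr h2⟩)
        have hxnec : x ≠ ctr i := by
          intro h; rw [h, dist_self] at hxrad; linarith
        have hn0d : dist x (ctr i) = ‖x - ctr i‖ := dist_eq_norm _ _
        set n0 : ℝ := ‖x - ctr i‖ with hn0
        have hn0pos : 0 < n0 := by rw [← hn0d]; exact dist_pos.mpr hxnec
        have hn0ge : rad i ≤ n0 := by rw [← hn0d]; exact hxrad
        set τ : ℝ := (n0 - rad i + 2/3)/2 with hτ
        have hτpos : 0 < τ := by rw [hτ]; linarith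
        have hτlt : τ < 2/3 := by rw [hτ]; rw [hn0d] at hlt; linarith
        set z : E3 := x + (τ/n0) • (ctr i - x) with hz
        have hzball : z ∈ Metric.ball x (2/3) := by
          rw [Metric.mem_ball, dist_eq_norm]
          have harr : z - x = (τ/n0) • (ctr i - x) := by rw [hz]; abel
          have hnrev : ‖ctr i - x‖ = n0 := by rw [hn0, norm_sub_rev]
          rw [harr, norm_smul, Real.norm_eq_abs, abs_of_pos (div_pos hτpos hn0pos), hnrev,
            div_mul_cancel₀ _ (ne_of_gt hn0pos)]
          exact hτlt
        have hzC : z ∈ C := hball hzball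
        have hzd : dist z (ctr i) = n0 - τ := by
          rw [dist_eq_norm]
          have harr : z - ctr i = (1 - τ/n0) • (x - ctr i) := by rw [hz]; module
          have hτn : τ/n0 ≤ 1 := by
            rw [div_le_one hn0pos]
            linarith
          rw [harr, norm_smul, Real.norm_eq_abs, abs_of_nonneg (by linarith : (0:ℝ) ≤ 1 - τ/n0),
            ← hn0, sub_mul, one_mul, div_mul_cancel₀ _ (ne_of_gt hn0pos)]
        have hzU : z ∈ U := by
          refine Set.mem_iUnion.mpr ⟨i, Metric.mem_ball.mpr ?_⟩
          rw [hzd, hτ]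
          rw [hn0d] at hlt
          linarith
        exact hzC.2 hzU
      have hxp : dist x (ctr i) = rad i + 2/3 := le_antisymm hxple hxpge
      have hpyne : ctr i - y ≠ 0 := by
        rw [sub_ne_zero]
        intro h
        rw [← h, dist_comm, dist_self] at hyrad
        linarith
      have hray : SameRay ℝ (y - x) (ctr i - y) := by
        rw [sameRay_iff_norm_add]
        have h1 : y - x + (ctr i - y) = ctr i - x := by abel
        have h2 : ‖ctr i - y‖ = rad i := by
          rw [← dist_eq_norm, dist_comm, hyrad]
        have h3 : ‖ctr i - x‖ = rad i + 2/3 := by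
          rw [← dist_eq_norm, dist_comm, hxp]
        rw [h1, hyx_norm, h2, h3]
        ring
      obtain ⟨ρ, hρpos, hρeq⟩ := hray.exists_pos_left hyxne hpyne
      have hρval : ρ * (2/3) = rad i := by
        have hn : ‖ctr i - y‖ = ρ * ‖y - x‖ := by
          rw [← hρeq, norm_smul, Real.norm_eq_abs, abs_of_pos hρpos]
        rw [hyx_norm] at hn
        rw [← dist_eq_norm, dist_comm, hyrad] at hn
        linarith
      intro w hwe hwn hmem
      have hkey : ctr i - x = (rad i + 2/3) • e := by
        have h1 : ctr i - x = ρ • (y - x) + (y - x) := by rw [hρeq]; abel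
        have h2 : ρ • (y - x) + (y - x) = (ρ + 1) • (y - x) := by module
        rw [h1, h2, he_def, smul_smul]
        congr 1
        linarith
      have harr : x + w + (24/25 : ℝ) • e - ctr i = w + (24/25 - (rad i + 2/3)) • e := by
        have h1 : x + w + (24/25 : ℝ) • e - ctr i = w + (24/25 : ℝ) • e - (ctr i - x) := by abel
        rw [h1, hkey]
        module
      have hq2 : ‖x + w + (24/25 : ℝ) • e - ctr i‖^2 = ‖w‖^2 + (24/25 - (rad i + 2/3))^2 := by
        rw [harr]; exact aux_norm_sq hwe he_norm _
      have hsq : ‖x + w + (24/25 : ℝ) • e - ctr i‖^2 < (rad i)^2 := by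
        nlinarith [norm_nonneg w, hq2, hwn, hr1i]
      have hqlt : ‖x + w + (24/25 : ℝ) • e - ctr i‖ < rad i :=
        lt_of_pow_lt_pow_left₀ 2 (by linarith) hsq
      exact hmem.2 (Set.mem_iUnion.mpr ⟨i, Metric.mem_ball.mpr (by rw [dist_eq_norm]; exact hqlt)⟩)
  -- orthonormal basis of the plane orthogonal to e
  have he0 : e ≠ 0 := by intro h; rw [h, norm_zero] at he_norm; norm_num at he_norm
  haveI : Fact (Module.finrank ℝ E3 = 2 + 1) := ⟨by simp [finrank_euclideanSpace_fin]⟩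
  set V : Submodule ℝ E3 := (ℝ ∙ e)ᗮ with hVdef
  have hVrank : Module.finrank ℝ V = 2 := Submodule.finrank_orthogonal_span_singleton he0
  set B := (stdOrthonormalBasis ℝ V).reindex (finCongr hVrank) with hBdef
  set wv : Fin 2 → E3 := fun i => (B i : E3) with hwvdef
  have hwv_norm : ∀ i, ‖wv i‖ = 1 := fun i => B.orthonormal.1 i
  have hwv_inner : ∀ i j, i ≠ j → ⟪wv i, wv j⟫ = 0 := by
    intro i j hij
    have h2 : ⟪B i, B j⟫ = 0 := B.orthonormal.2 hij
    rw [Submodule.coe_inner] at h2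
    exact h2
  have hwv_self : ∀ i, ⟪wv i, wv i⟫ = 1 := by
    intro i
    rw [real_inner_self_eq_norm_sq, hwv_norm i]; norm_num
  have he_wv : ∀ i, ⟪e, wv i⟫ = 0 := by
    intro i
    have hmem : (B i : E3) ∈ (ℝ ∙ e)ᗮ := (B i).2
    exact (Submodule.mem_orthogonal _ _).mp hmem e (Submodule.mem_span_singleton_self e)
  have hwv_e : ∀ i, ⟪wv i, e⟫ = 0 := fun i => by
    rw [real_inner_comm]; exact he_wv i
  set A : Set E3 := frontier C ∩ Metric.closedBall x 1 with hAdef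
  set g : E3 → (Fin 2 → ℝ) := fun z i => ⟪z - x, wv i⟫ with hgdef
  have hLip : LipschitzWith 1 g := by
    apply LipschitzWith.of_dist_le_mul
    intro z z'
    rw [NNReal.coe_one, one_mul, dist_pi_le_iff dist_nonneg]
    intro i
    rw [Real.dist_eq]
    have hdiff : g z i - g z' i = ⟪z - z', wv i⟫ := by
      show ⟪z - x, wv i⟫ - ⟪z' - x, wv i⟫ = ⟪z - z', wv i⟫
      rw [← inner_sub_left]
      congr 1
      abel
    rw [hdiff]
    calc |⟪z - z', wv i⟫| ≤ ‖z - z'‖ * ‖wv i‖ := abs_real_inner_le_norm _ _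
      _ = dist z z' := by rw [hwv_norm i, mul_one, dist_eq_norm]
  have hbox : (Set.univ.pi fun _ : Fin 2 => Set.Icc (-(1/8) : ℝ) (1/8)) ⊆ g '' A := by
    intro u hu
    have hu0 : u 0 ∈ Set.Icc (-(1/8) : ℝ) (1/8) := hu 0 trivial
    have hu1 : u 1 ∈ Set.Icc (-(1/8) : ℝ) (1/8) := hu 1 trivial
    set w : E3 := u 0 • wv 0 + u 1 • wv 1 with hwdef
    have hwe : ⟪w, e⟫ = 0 := by
      rw [hwdef, inner_add_left, real_inner_smul_left, real_inner_smul_left, hwv_e 0, hwv_e 1]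
      ring
    have hwn2 : ‖w‖ ^ 2 = (u 0)^2 + (u 1)^2 := by
      rw [hwdef, norm_add_sq_real, real_inner_smul_left, real_inner_smul_right,
        hwv_inner 0 1 (by norm_num), norm_smul, norm_smul, hwv_norm 0, hwv_norm 1,
        Real.norm_eq_abs, Real.norm_eq_abs]
      simp [sq_abs]
    have hwn : ‖w‖ ≤ 1/4 := by
      nlinarith [norm_nonneg w, hu0.1, hu0.2, hu1.1, hu1.2, hwn2]
    have h0 : ⟪w, wv 0⟫ = u 0 := by
      rw [hwdef, inner_add_left, real_inner_smul_left, real_inner_smul_left,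
        hwv_self 0, hwv_inner 1 0 (by norm_num)]
      ring
    have h1 : ⟪w, wv 1⟫ = u 1 := by
      rw [hwdef, inner_add_left, real_inner_smul_left, real_inner_smul_left,
        hwv_self 1, hwv_inner 0 1 (by norm_num)]
      ring
    have hw_inner : ∀ i, ⟪w, wv i⟫ = u i := by
      intro i
      fin_cases i
      · exact h0
      · exact h1
    have hcont : Continuous fun t : ℝ => x + w + t • e :=
      continuous_const.add (continuous_id.smul continuous_const)
    have hpre : IsPreconnected ((fun t : ℝ => x + w + t • e) '' Set.Icc 0 (24/25)) :=
      isPreconnected_Icc.image _ hcont.continuousOn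
    have hamem : x + w + (0:ℝ) • e ∈ C := by
      apply hball
      rw [Metric.mem_ball, dist_eq_norm]
      have harr : x + w + (0:ℝ) • e - x = w := by rw [zero_smul]; abel
      rw [harr]
      linarith
    have hbnot : x + w + (24/25 : ℝ) • e ∉ C := hout w hwe hwn
    obtain ⟨z, hzS, hzf⟩ := aux_frontier_hit hpre
      (Set.mem_image_of_mem _ (Set.mem_Icc.mpr (by norm_num) : (0:ℝ) ∈ Set.Icc (0:ℝ) (24/25)))
      hamem
      (Set.mem_image_of_mem _ (Set.mem_Icc.mpr (by norm_num) : (24/25:ℝ) ∈ Set.Icc (0:ℝ) (24/25)))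
      hbnot
    obtain ⟨t, htI, rfl⟩ := hzS
    refine ⟨x + w + t • e, ⟨hzf, ?_⟩, ?_⟩
    · rw [Metric.mem_closedBall, dist_eq_norm]
      have harr : x + w + t • e - x = w + t • e := by abel
      rw [harr]
      have hsq : ‖w + t • e‖ ^ 2 = ‖w‖ ^ 2 + t ^ 2 := aux_norm_sq hwe he_norm t
      nlinarith [norm_nonneg (w + t • e), htI.1, htI.2, norm_nonneg w, hwn, hsq]
    · funext i
      show ⟪x + w + t • e - x, wv i⟫ = u i
      have harr : x + w + t • e - x = w + t • e := by abel
      rw [harr, inner_add_left, real_inner_smul_left, he_wv i, hw_inner i]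
      ring
  -- measure computation
  have hμ2 : (μH[2] : Measure (Fin 2 → ℝ)) = volume := by
    have h := hausdorffMeasure_pi_real (ι := Fin 2)
    rw [show ((Fintype.card (Fin 2) : ℝ)) = 2 by simp] at h
    exact h
  have hμbox : ENNReal.ofReal (1/16 : ℝ) ≤ μH[2] (g '' A) := by
    have h2 : volume (Set.univ.pi fun _ : Fin 2 => Set.Icc (-(1/8) : ℝ) (1/8))
        = ENNReal.ofReal (1/16 : ℝ) := by
      rw [volume_pi_pi]
      simp only [Real.volume_Icc]
      rw [Finset.prod_const]
      rw [show (Finset.univ.card : ℕ) = 2 from by simp]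
      rw [show ((1:ℝ)/8 - -(1/8)) = 1/4 by norm_num]
      rw [← ENNReal.ofReal_pow (by norm_num)]
      norm_num
    calc ENNReal.ofReal (1/16 : ℝ)
        = volume (Set.univ.pi fun _ : Fin 2 => Set.Icc (-(1/8) : ℝ) (1/8)) := h2.symm
      _ = μH[2] (Set.univ.pi fun _ : Fin 2 => Set.Icc (-(1/8) : ℝ) (1/8)) := by rw [hμ2]
      _ ≤ μH[2] (g '' A) := measure_mono hbox
  have hμA : μH[2] (g '' A) ≤ μH[2] A := by
    have h := hLip.hausdorffMeasure_image_le (by norm_num : (0:ℝ) ≤ 2) A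
    simpa using h
  exact hμbox.trans hμA
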